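/- arXiv:2501.10205 — 3 statements merged into one kernel-verified Lean document; each statement's English description precedes it below -/
import Mathlib

section
/- Let W be a real inner product space of dimension 2n (n ≥ 1) with an orthogonal complex structure J (a linear isometry J : W → W with J ∘ J = −id), let (e_1, …, e_{2n}) be an orthonormal basis of W, let V be a finite-dimensional real inner product space, and let R : W × W → V be an alternating ℝ-bilinear map. Then 2·|R|² + ∑_{i,j=1}^{2n} ⟨R(e_i,e_j), R(J e_i, J e_j)⟩ + ‖∑_{i=1}^{2n} R(e_i, J e_i)‖² ≤ (4 + 4n)·|R|², where |R|² := (1/2)·∑_{i,j=1}^{2n} ‖R(e_i,e_j)‖². -/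
open RealInnerProductSpace Finset

section Aux

variable {W V : Type*} [NormedAddCommGroup W] [InnerProductSpace ℝ W]
  [NormedAddCommGroup V] [InnerProductSpace ℝ V]

/-- Parseval. -/
lemma parseval_aux {ι : Type*} [Fintype ι] (v : OrthonormalBasis ι ℝ V) (y : V) :
    ‖y‖ ^ 2 = ∑ b, ⟪y, v b⟫ ^ 2 := by
  have := v.sum_inner_mul_inner y y
  rw [← real_inner_self_eq_norm_sq]
  rw [← this]
  congr 1; ext b
  rw [sq, real_inner_comm (v b) y]

variable [FiniteDimensional ℝ W] [FiniteDimensional ℝ V]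

lemma sum_norm_sq_eq_adjoint {ι κ : Type*} [Fintype ι] [Fintype κ]
    (T : W →ₗ[ℝ] V) (e : OrthonormalBasis ι ℝ W) (v : OrthonormalBasis κ ℝ V) :
    ∑ i, ‖T (e i)‖ ^ 2 = ∑ b, ‖LinearMap.adjoint T (v b)‖ ^ 2 := by
  calc ∑ i, ‖T (e i)‖ ^ 2 = ∑ i, ∑ b, ⟪T (e i), v b⟫ ^ 2 := by
        simp_rw [parseval_aux v]
    _ = ∑ b, ∑ i, ⟪LinearMap.adjoint T (v b), e i⟫ ^ 2 := by
        rw [Finset.sum_comm]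
        congr 1; ext b; congr 1; ext i
        rw [LinearMap.adjoint_inner_left, real_inner_comm]
    _ = ∑ b, ‖LinearMap.adjoint T (v b)‖ ^ 2 := by
        congr 1; ext b
        rw [parseval_aux e]

lemma sum_norm_sq_basis_indep {ι : Type*} [Fintype ι]
    (T : W →ₗ[ℝ] V) (e f : OrthonormalBasis ι ℝ W) :
    ∑ i, ‖T (e i)‖ ^ 2 = ∑ i, ‖T (f i)‖ ^ 2 := by
  rw [sum_norm_sq_eq_adjoint T e (stdOrthonormalBasis ℝ V),
    sum_norm_sq_eq_adjoint T f (stdOrthonormalBasis ℝ V)]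

lemma norm_apply_sq_le {ι : Type*} [Fintype ι]
    (T : W →ₗ[ℝ] V) (e : OrthonormalBasis ι ℝ W) (u : W) (hu : ‖u‖ = 1) :
    ‖T u‖ ^ 2 ≤ ∑ i, ‖T (e i)‖ ^ 2 := by
  rw [sum_norm_sq_eq_adjoint T e (stdOrthonormalBasis ℝ V),
    parseval_aux (stdOrthonormalBasis ℝ V)]
  apply Finset.sum_le_sum
  intro b _
  rw [← LinearMap.adjoint_inner_right]
  have h1 := abs_real_inner_le_norm u (LinearMap.adjoint T (stdOrthonormalBasis ℝ V b))
  rw [hu, one_mul] at h1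
  have h2 := sq_abs ⟪u, LinearMap.adjoint T (stdOrthonormalBasis ℝ V b)⟫
  nlinarith [abs_nonneg ⟪u, LinearMap.adjoint T (stdOrthonormalBasis ℝ V b)⟫, norm_nonneg (LinearMap.adjoint T (stdOrthonormalBasis ℝ V b))]

lemma norm_sum_sq_le_card {ι : Type*} [Fintype ι] (x : ι → V) :
    ‖∑ i, x i‖ ^ 2 ≤ (Fintype.card ι : ℝ) * ∑ i, ‖x i‖ ^ 2 := by
  calc ‖∑ i, x i‖ ^ 2 ≤ (∑ i, ‖x i‖) ^ 2 := by
        apply pow_le_pow_left₀ (norm_nonneg _) (norm_sum_le _ _)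
    _ = (∑ i, 1 * ‖x i‖) ^ 2 := by simp
    _ ≤ (∑ _i : ι, (1:ℝ) ^ 2) * ∑ i, ‖x i‖ ^ 2 :=
        Finset.sum_mul_sq_le_sq_mul_sq _ _ _
    _ = (Fintype.card ι : ℝ) * ∑ i, ‖x i‖ ^ 2 := by simp

end Aux

/-- Lemma 3.5(i) of the paper, at a point: for an alternating bilinear map `R`
on a `2n`-dimensional real inner product space `W` with orthogonal complex
structure `J`, one has
`2|R|² + ∑ᵢⱼ ⟨R(eᵢ,eⱼ), R(Jeᵢ,Jeⱼ)⟩ + ‖∑ᵢ R(eᵢ,Jeᵢ)‖² ≤ (4+4n)|R|²`,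
where `|R|² = (1/2)∑ᵢⱼ ‖R(eᵢ,eⱼ)‖²`. -/
theorem stability_pointwise_estimate_i
    {W V : Type*} [NormedAddCommGroup W] [InnerProductSpace ℝ W]
    [NormedAddCommGroup V] [InnerProductSpace ℝ V] [FiniteDimensional ℝ V]
    {n : ℕ} (hn : 1 ≤ n)
    (e : OrthonormalBasis (Fin (2 * n)) ℝ W)
    (J : W →ₗᵢ[ℝ] W) (hJ : ∀ x : W, J (J x) = -x)
    (R : W →ₗ[ℝ] W →ₗ[ℝ] V) (hR : ∀ x : W, R x x = 0) :
    2 * ((1 / 2) * ∑ i, ∑ j, ‖R (e i) (e j)‖ ^ 2)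
      + (∑ i, ∑ j, ⟪R (e i) (e j), R (J (e i)) (J (e j))⟫)
      + ‖∑ i, R (e i) (J (e i))‖ ^ 2
    ≤ (4 + 4 * (n : ℝ)) * ((1 / 2) * ∑ i, ∑ j, ‖R (e i) (e j)‖ ^ 2) := by
  haveI : FiniteDimensional ℝ W := Module.Finite.of_basis e.toBasis
  -- J as a linear isometry equivalence
  set Jeq : W ≃ₗᵢ[ℝ] W :=
    { toLinearEquiv := LinearEquiv.ofLinear J.toLinearMap (-J.toLinearMap)
        (by ext x; simp [hJ x]) (by ext x; simp [hJ x])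
      norm_map' := J.norm_map } with hJeq
  have hJeq_apply : ∀ x, Jeq x = J x := fun x => rfl
  set f : OrthonormalBasis (Fin (2 * n)) ℝ W := e.map Jeq with hf
  have hf_apply : ∀ i, f i = J (e i) := fun i => by
    simp [hf, OrthonormalBasis.map_apply, hJeq_apply]
  set A := ∑ i, ∑ j, ‖R (e i) (e j)‖ ^ 2 with hA
  have hA_nonneg : 0 ≤ A := Finset.sum_nonneg fun i _ =>
    Finset.sum_nonneg fun j _ => sq_nonneg _
  -- A is the same with f in both slots
  have hAf : ∑ i, ∑ j, ‖R (f i) (f j)‖ ^ 2 = A := by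
    have h1 : ∀ i, ∑ j, ‖R (f i) (f j)‖ ^ 2 = ∑ j, ‖R (f i) (e j)‖ ^ 2 :=
      fun i => sum_norm_sq_basis_indep (R (f i)) f e
    have h2 : ∀ j, ∑ i, ‖R (f i) (e j)‖ ^ 2 = ∑ i, ‖R (e i) (e j)‖ ^ 2 :=
      fun j => sum_norm_sq_basis_indep (R.flip (e j)) f e
    calc ∑ i, ∑ j, ‖R (f i) (f j)‖ ^ 2 = ∑ i, ∑ j, ‖R (f i) (e j)‖ ^ 2 := by
          exact Finset.sum_congr rfl fun i _ => h1 i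
      _ = ∑ j, ∑ i, ‖R (f i) (e j)‖ ^ 2 := Finset.sum_comm
      _ = ∑ j, ∑ i, ‖R (e i) (e j)‖ ^ 2 := Finset.sum_congr rfl fun j _ => h2 j
      _ = A := Finset.sum_comm
  -- middle sum bound
  have hS : (∑ i, ∑ j, ⟪R (e i) (e j), R (J (e i)) (J (e j))⟫) ≤ A := by
    have key : ∀ (u v : V), ⟪u, v⟫ ≤ (‖u‖ ^ 2 + ‖v‖ ^ 2) / 2 := by
      intro u v
      nlinarith [real_inner_le_norm u v, sq_nonneg (‖u‖ - ‖v‖), norm_nonneg u, norm_nonneg v]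
    calc (∑ i, ∑ j, ⟪R (e i) (e j), R (J (e i)) (J (e j))⟫)
        ≤ ∑ i, ∑ j, (‖R (e i) (e j)‖ ^ 2 + ‖R (J (e i)) (J (e j))‖ ^ 2) / 2 :=
          Finset.sum_le_sum fun i _ => Finset.sum_le_sum fun j _ => key _ _
      _ = (A + ∑ i, ∑ j, ‖R (f i) (f j)‖ ^ 2) / 2 := by
          simp_rw [hf_apply, hA, ← Finset.sum_div, ← Finset.sum_add_distrib]
      _ = A := by rw [hAf]; ring
  -- last term bound
  have hT : ‖∑ i, R (e i) (J (e i))‖ ^ 2 ≤ (2 * n : ℝ) * A := by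
    calc ‖∑ i, R (e i) (J (e i))‖ ^ 2
        ≤ (Fintype.card (Fin (2 * n)) : ℝ) * ∑ i, ‖R (e i) (J (e i))‖ ^ 2 :=
          norm_sum_sq_le_card _
      _ ≤ (2 * n : ℝ) * A := by
          rw [Fintype.card_fin]
          push_cast
          apply mul_le_mul_of_nonneg_left _ (by positivity)
          apply Finset.sum_le_sum
          intro i _
          exact norm_apply_sq_le (R (e i)) e (J (e i))
            (by rw [J.norm_map]; exact e.orthonormal.1 i)
  nlinarith [hA_nonneg, hS, hT, (Nat.one_le_cast.mpr hn : (1:ℝ) ≤ n)]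
end

section
/- Let W be a real inner product space of dimension 2n (n ≥ 1) with an orthogonal complex structure J (a linear isometry J : W → W with J ∘ J = −id), let (e_1, …, e_{2n}) be an orthonormal basis of W, let V be a finite-dimensional real inner product space, and let R : W × W → V be an alternating ℝ-bilinear map. For X, Y ∈ W write ⟨i_X R, i_Y R⟩ := ∑_{k=1}^{2n} ⟨R(X, e_k), R(Y, e_k)⟩, and set |R|² := (1/2)·∑_{i,j=1}^{2n} ‖R(e_i,e_j)‖². Then 4·|R|⁴ + ∑_{i,j=1}^{2n} ( ⟨i_{e_i}R, i_{e_j}R⟩² + ⟨i_{e_i}R, i_{e_j}R⟩·⟨i_{J e_i}R, i_{J e_j}R⟩ ) ≥ (4 + 4/n)·|R|⁴. -/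
open RealInnerProductSpace

section Aux

variable {W : Type*} [NormedAddCommGroup W] [InnerProductSpace ℝ W] [FiniteDimensional ℝ W]
  {ι κ : Type*} [Fintype ι] [Fintype κ]

/-- Trace of an operator is independent of the orthonormal basis. -/
lemma sum_inner_map_self_eq (f : OrthonormalBasis ι ℝ W) (g : OrthonormalBasis κ ℝ W)
    (T : W →ₗ[ℝ] W) :
    ∑ i, ⟪T (f i), f i⟫ = ∑ j, ⟪T (g j), g j⟫ := by
  have h1 : ∀ i, ⟪T (f i), f i⟫ = ∑ j, ⟪T (f i), g j⟫ * ⟪g j, f i⟫ := fun i =>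
    (g.sum_inner_mul_inner (T (f i)) (f i)).symm
  have h2 : ∀ j, ⟪T (g j), g j⟫ = ∑ i, ⟪g j, f i⟫ * ⟪T (f i), g j⟫ := by
    intro j
    calc ⟪T (g j), g j⟫ = ⟪g j, LinearMap.adjoint T (g j)⟫ :=
          (LinearMap.adjoint_inner_right T (g j) (g j)).symm
      _ = ∑ i, ⟪g j, f i⟫ * ⟪f i, LinearMap.adjoint T (g j)⟫ :=
          (f.sum_inner_mul_inner _ _).symm
      _ = ∑ i, ⟪g j, f i⟫ * ⟪T (f i), g j⟫ := by
          refine Finset.sum_congr rfl fun i _ => ?_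
          rw [LinearMap.adjoint_inner_right]
  simp only [h1, h2]
  rw [Finset.sum_comm]
  exact Finset.sum_congr rfl fun j _ => Finset.sum_congr rfl fun i _ => by ring

/-- the arithmetic core of the estimate -/
lemma arith_core {m : ℕ} (hm : 0 < m) (A B : Fin m → Fin m → ℝ) (t : ℝ)
    (htrA : ∑ i, A i i = 2 * t) (htrB : ∑ i, B i i = 2 * t)
    (hBB : ∑ i, ∑ j, B i j ^ 2 = ∑ i, ∑ j, A i j ^ 2) :
    8 * t ^ 2 / m ≤ ∑ i, ∑ j, (A i j ^ 2 + A i j * B i j) := by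
  have hsum : ∑ i, ∑ j, (A i j ^ 2 + A i j * B i j)
      = (1 / 2) * ∑ i, ∑ j, (A i j + B i j) ^ 2 := by
    have e2 : ∑ i, ∑ j, (A i j + B i j) ^ 2
        = (∑ i, ∑ j, (A i j ^ 2 + A i j * B i j))
          + ∑ i, ∑ j, (B i j ^ 2 + A i j * B i j) := by
      rw [← Finset.sum_add_distrib]
      refine Finset.sum_congr rfl fun i _ => ?_
      rw [← Finset.sum_add_distrib]
      exact Finset.sum_congr rfl fun j _ => by ring
    have e3 : ∑ i, ∑ j, (B i j ^ 2 + A i j * B i j)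
        = ∑ i, ∑ j, (A i j ^ 2 + A i j * B i j) := by
      simp only [Finset.sum_add_distrib]
      rw [hBB]
    rw [e2, e3]; ring
  have htrC : ∑ i, (A i i + B i i) = 4 * t := by
    rw [Finset.sum_add_distrib, htrA, htrB]; ring
  have hCS : (4 * t) ^ 2 ≤ (m : ℝ) * ∑ i, (A i i + B i i) ^ 2 := by
    rw [← htrC]
    have := sq_sum_le_card_mul_sum_sq (s := (Finset.univ : Finset (Fin m)))
      (f := fun i => A i i + B i i)
    simpa using this
  have hdiag : ∑ i, (A i i + B i i) ^ 2 ≤ ∑ i, ∑ j, (A i j + B i j) ^ 2 := by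
    refine Finset.sum_le_sum fun i _ => ?_
    exact Finset.single_le_sum (f := fun j => (A i j + B i j) ^ 2)
      (fun j _ => sq_nonneg _) (Finset.mem_univ i)
  have hmpos : (0 : ℝ) < m := by exact_mod_cast hm
  rw [hsum, div_le_iff₀ hmpos]
  nlinarith [mul_le_mul_of_nonneg_left hdiag (le_of_lt hmpos)]

end Aux

/-- Lemma 3.5(ii) (sharp form): with the contraction pairing
`⟨i_X R, i_Y R⟩ = ∑ₖ ⟨R(X,eₖ), R(Y,eₖ)⟩` and `|R|² = (1/2)∑ᵢⱼ ‖R(eᵢ,eⱼ)‖²`,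
one has `4|R|⁴ + ∑ᵢⱼ (⟨i_{eᵢ}R, i_{eⱼ}R⟩² + ⟨i_{eᵢ}R, i_{eⱼ}R⟩⟨i_{Jeᵢ}R, i_{Jeⱼ}R⟩)
≥ (4 + 4/n)|R|⁴`. -/
theorem stability_pointwise_estimate_ii
    {W V : Type*} [NormedAddCommGroup W] [InnerProductSpace ℝ W]
    [NormedAddCommGroup V] [InnerProductSpace ℝ V] [FiniteDimensional ℝ V]
    {n : ℕ} (hn : 1 ≤ n)
    (e : OrthonormalBasis (Fin (2 * n)) ℝ W)
    (J : W →ₗᵢ[ℝ] W) (hJ : ∀ x : W, J (J x) = -x)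
    (R : W →ₗ[ℝ] W →ₗ[ℝ] V) (hR : ∀ x : W, R x x = 0)
    (ip : W → W → ℝ)
    (hip : ∀ X Y : W, ip X Y = ∑ k, ⟪R X (e k), R Y (e k)⟫)
    (nR2 : ℝ) (hnR2 : nR2 = (1 / 2) * ∑ i, ∑ j, ‖R (e i) (e j)‖ ^ 2) :
    4 * nR2 ^ 2
      + ∑ i, ∑ j, ((ip (e i) (e j)) ^ 2
          + ip (e i) (e j) * ip (J (e i)) (J (e j)))
    ≥ (4 + 4 / (n : ℝ)) * nR2 ^ 2 := by
  haveI : FiniteDimensional ℝ W := Module.Finite.of_basis e.toBasis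
  -- J as a linear isometry equivalence
  have hJsurj : Function.Surjective J := by
    intro y; exact ⟨-(J y), by rw [map_neg, hJ, neg_neg]⟩
  let Jeq : W ≃ₗᵢ[ℝ] W := LinearIsometryEquiv.ofSurjective J hJsurj
  let f : OrthonormalBasis (Fin (2 * n)) ℝ W := e.map Jeq
  have hf : ∀ i, f i = J (e i) := by
    intro i
    simp [f, Jeq, OrthonormalBasis.map_apply, LinearIsometryEquiv.coe_ofSurjective]
  -- package R into a linear map to PiLp
  let F : W →ₗ[ℝ] PiLp 2 (fun _ : Fin (2 * n) => V) :=
    (WithLp.linearEquiv 2 ℝ (∀ _ : Fin (2 * n), V)).symm.toLinearMap ∘ₗ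
      LinearMap.pi (fun k => R.flip (e k))
  have hipF : ∀ X Y : W, ip X Y = ⟪F X, F Y⟫ := by
    intro X Y
    rw [hip, PiLp.inner_apply]
    rfl
  let S : W →ₗ[ℝ] W := LinearMap.adjoint F ∘ₗ F
  have hipS : ∀ X Y : W, ip X Y = ⟪S X, Y⟫ := by
    intro X Y
    rw [hipF]
    exact (LinearMap.adjoint_inner_left F Y (F X)).symm
  -- trace
  have htrA : ∑ i, ip (e i) (e i) = 2 * nR2 := by
    have h : ∀ i : Fin (2 * n), ip (e i) (e i) = ∑ j, ‖R (e i) (e j)‖ ^ 2 := by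
      intro i
      rw [hip]
      exact Finset.sum_congr rfl fun j _ => real_inner_self_eq_norm_sq _
    simp only [h, hnR2]; ring
  have htrB : ∑ i, ip (f i) (f i) = 2 * nR2 := by
    have : ∑ i, ip (f i) (f i) = ∑ i, ip (e i) (e i) := by
      simp only [hipS]
      exact sum_inner_map_self_eq f e S
    rw [this, htrA]
  -- Hilbert–Schmidt norms
  have parseval : ∀ (b : OrthonormalBasis (Fin (2 * n)) ℝ W) (x : W),
      ∑ j, ⟪x, b j⟫ ^ 2 = ‖x‖ ^ 2 := by
    intro b x
    rw [← real_inner_self_eq_norm_sq, ← b.sum_inner_mul_inner x x]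
    exact Finset.sum_congr rfl fun j _ => by rw [sq, real_inner_comm (b j) x]
  have hSS : ∀ x : W, ⟪(LinearMap.adjoint S ∘ₗ S) x, x⟫ = ‖S x‖ ^ 2 := by
    intro x
    rw [LinearMap.comp_apply, LinearMap.adjoint_inner_left, real_inner_self_eq_norm_sq]
  have hHS : ∀ b : OrthonormalBasis (Fin (2 * n)) ℝ W,
      ∑ i, ∑ j, ip (b i) (b j) ^ 2
        = ∑ i, ⟪(LinearMap.adjoint S ∘ₗ S) (b i), b i⟫ := by
    intro b
    refine Finset.sum_congr rfl fun i _ => ?_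
    rw [hSS]
    rw [← parseval b (S (b i))]
    exact Finset.sum_congr rfl fun j _ => by rw [hipS, real_inner_comm]
  have hHSeq : ∑ i, ∑ j, ip (f i) (f j) ^ 2 = ∑ i, ∑ j, ip (e i) (e j) ^ 2 := by
    rw [hHS f, hHS e]
    exact sum_inner_map_self_eq f e _
  -- apply the arithmetic core
  have hm : 0 < 2 * n := by omega
  have key := arith_core hm (fun i j => ip (e i) (e j)) (fun i j => ip (f i) (f j)) nR2
    htrA htrB hHSeq
  simp only [hf] at key
  have hcast : ((2 * n : ℕ) : ℝ) = 2 * n := by push_cast; ring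
  rw [hcast] at key
  have hnpos : (0 : ℝ) < n := by exact_mod_cast hn
  have h8 : 8 * nR2 ^ 2 / (2 * (n : ℝ)) = 4 * nR2 ^ 2 / n := by
    field_simp; ring
  rw [h8] at key
  have hout : (4 + 4 / (n : ℝ)) * nR2 ^ 2 = 4 * nR2 ^ 2 + 4 * nR2 ^ 2 / n := by
    field_simp
  rw [ge_iff_le, hout]
  linarith [key]
end

section
/- Let n be a positive integer and let a_1, …, a_n be real numbers. Then ∑_{t=1}^{n} (1/(t(t+1)))·( ∑_{γ=t+1}^{n} a_γ )² = ∑_{t=1}^{n} (1 − 1/t)·a_t² + 2·∑_{t=1}^{n} (1 − 1/t)·a_t·( ∑_{γ=t+1}^{n} a_γ ). -/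
/-- The summation-reordering identity used in the proof of Lemma 3.4(iii):
`∑ₜ (1/(t(t+1)))·(∑_{γ=t+1}^n a_γ)²
  = ∑ₜ (1 − 1/t)·aₜ² + 2·∑ₜ (1 − 1/t)·aₜ·(∑_{γ=t+1}^n a_γ)`. -/
theorem summation_reordering_identity (n : ℕ) (hn : 0 < n) (a : ℕ → ℝ) :
    ∑ t ∈ Finset.Icc 1 n,
        (1 / ((t : ℝ) * (t + 1)))
          * (∑ γ ∈ Finset.Icc (t + 1) n, a γ) ^ 2
      = (∑ t ∈ Finset.Icc 1 n, (1 - 1 / (t : ℝ)) * (a t) ^ 2)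
        + 2 * ∑ t ∈ Finset.Icc 1 n,
            (1 - 1 / (t : ℝ)) * a t * ∑ γ ∈ Finset.Icc (t + 1) n, a γ := by
  set S : ℕ → ℝ := fun t => ∑ γ ∈ Finset.Icc (t + 1) n, a γ with hS
  set E : ℕ → ℝ := fun t => (1 - 1 / (t : ℝ)) * (∑ γ ∈ Finset.Icc t n, a γ) ^ 2 with hE
  have hEn : E (n + 1) = 0 := by
    simp [hE, Finset.Icc_eq_empty_of_lt (Nat.lt_succ_self n)]
  have hE1 : E 1 = 0 := by simp [hE]
  have tel : ∑ t ∈ Finset.Icc 1 n, (E (t + 1) - E t) = 0 := by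
    have h := Finset.sum_range_sub (fun i => E (i + 1)) n
    rw [← Finset.Ico_add_one_right_eq_Icc, Finset.sum_Ico_eq_sum_range]
    simp only [Nat.succ_sub_one, Nat.add_sub_cancel, add_comm 1]
    simp only [zero_add] at h
    rw [h, hEn, hE1, sub_zero]
  have key : ∀ t ∈ Finset.Icc 1 n,
      (1 / ((t : ℝ) * (t + 1))) * S t ^ 2
        = ((1 - 1 / (t : ℝ)) * (a t) ^ 2 + 2 * ((1 - 1 / (t : ℝ)) * a t * S t))
          + (E (t + 1) - E t) := by
    intro t ht
    obtain ⟨ht1, htn⟩ := Finset.mem_Icc.mp ht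
    have hsplit : ∑ γ ∈ Finset.Icc t n, a γ = a t + S t := by
      rw [← Finset.Ioc_insert_left htn, Finset.sum_insert (by simp),
        ← Finset.Icc_add_one_left_eq_Ioc, hS]
    have hE2 : E (t + 1) = (1 - 1 / ((t : ℝ) + 1)) * S t ^ 2 := by
      simp [hE, hS]
    have hEt : E t = (1 - 1 / (t : ℝ)) * (a t + S t) ^ 2 := by
      simp only [hE]; rw [hsplit]
    rw [hE2, hEt]
    have ht0 : (t : ℝ) ≠ 0 := by positivity
    have ht0' : (t : ℝ) + 1 ≠ 0 := by positivity
    field_simp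
    ring
  calc ∑ t ∈ Finset.Icc 1 n, (1 / ((t : ℝ) * (t + 1))) * S t ^ 2
      = ∑ t ∈ Finset.Icc 1 n,
          (((1 - 1 / (t : ℝ)) * (a t) ^ 2 + 2 * ((1 - 1 / (t : ℝ)) * a t * S t))
            + (E (t + 1) - E t)) := Finset.sum_congr rfl key
    _ = (∑ t ∈ Finset.Icc 1 n, (1 - 1 / (t : ℝ)) * (a t) ^ 2)
        + 2 * ∑ t ∈ Finset.Icc 1 n, (1 - 1 / (t : ℝ)) * a t * S t := by
      rw [Finset.sum_add_distrib, tel, add_zero, Finset.sum_add_distrib,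
        Finset.mul_sum]
end
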